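/- For any graph G with matching number at most ν and maximum degree at most Δ (where ν, Δ ≥ 1), the number of edges of G is at most νΔ + ⌊Δ/2⌋·⌊ν/⌈Δ/2⌉⌋, and in particular at most ν(Δ+1). -/

import Mathlib

open SimpleGraph Finset Function

namespace CH

variable {V : Type*} [Fintype V] [DecidableEq V]

/-- The restriction of `G` to the vertex set `s`. -/
def Rg (G : SimpleGraph V) [DecidableRel G.Adj] (s : Finset V) : SimpleGraph V where
  Adj u v := G.Adj u v ∧ u ∈ s ∧ v ∈ s
  symm := ⟨fun u v h => ⟨h.1.symm, h.2.2, h.2.1⟩⟩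
  loopless := ⟨fun v h => G.loopless.irrefl v h.1⟩

instance (G : SimpleGraph V) [DecidableRel G.Adj] (s : Finset V) :
    DecidableRel (Rg G s).Adj := fun u v =>
  inferInstanceAs (Decidable (G.Adj u v ∧ u ∈ s ∧ v ∈ s))

/-- The support of an involution, i.e. the set of matched vertices. -/
def suppF (m : V → V) : Finset V := univ.filter (fun v => m v ≠ v)

lemma mem_suppF {m : V → V} {v : V} : v ∈ suppF m ↔ m v ≠ v := by
  simp [suppF]

/-- `m` is a matching of `G` with all matched vertices inside `s`. -/
def IsM (G : SimpleGraph V) (s : Finset V) (m : V → V) : Prop :=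
  Involutive m ∧ ∀ v, m v ≠ v → G.Adj v (m v) ∧ v ∈ s

lemma IsM.mono {G : SimpleGraph V} {s t : Finset V} {m : V → V} (hst : s ⊆ t)
    (h : IsM G s m) : IsM G t m :=
  ⟨h.1, fun v hv => ⟨(h.2 v hv).1, hst (h.2 v hv).2⟩⟩

lemma IsM.mem_of_mem_suppF {G : SimpleGraph V} {s : Finset V} {m : V → V}
    (h : IsM G s m) {v : V} (hv : v ∈ suppF m) : v ∈ s :=
  (h.2 v (mem_suppF.1 hv)).2

lemma isM_id (G : SimpleGraph V) (s : Finset V) : IsM G s id :=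
  ⟨fun _ => rfl, fun v hv => absurd rfl hv⟩

open scoped Classical in
/-- Twice the matching number of `G` restricted to `s` (number of matched vertices). -/
noncomputable def nuv (G : SimpleGraph V) [DecidableRel G.Adj] (s : Finset V) : ℕ :=
  (univ.filter (IsM G s)).sup fun m => (suppF m).card

variable {G : SimpleGraph V} [DecidableRel G.Adj]

lemma le_nuv {s : Finset V} {m : V → V} (h : IsM G s m) : (suppF m).card ≤ nuv G s := by
  classical
  refine Finset.le_sup (f := fun m => (suppF m).card) ?_
  simp only [Finset.mem_filter, Finset.mem_univ, true_and]
  convert h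
  -- classical instance mismatch
  
lemma exists_max_matching (s : Finset V) : ∃ m, IsM G s m ∧ (suppF m).card = nuv G s := by
  classical
  obtain ⟨m, hm, hs⟩ := Finset.exists_mem_eq_sup (univ.filter (IsM G s))
    ⟨id, by simp [isM_id]⟩ (fun m => (suppF m).card)
  refine ⟨m, ?_, ?_⟩
  · simpa using hm
  · rw [nuv]
    convert hs.symm

lemma nuv_mono {s t : Finset V} (hst : s ⊆ t) : nuv G s ≤ nuv G t := by
  obtain ⟨m, hm, hc⟩ := exists_max_matching (G := G) s
  rw [← hc]
  exact le_nuv (hm.mono hst)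

lemma nuv_le_card (s : Finset V) : nuv G s ≤ s.card := by
  obtain ⟨m, hm, hc⟩ := exists_max_matching (G := G) s
  rw [← hc]
  exact Finset.card_le_card fun v hv => hm.mem_of_mem_suppF hv

/-- The support of an involution has even cardinality. -/
lemma even_suppF_card {m : V → V} (h : Involutive m) : Even (suppF m).card := by
  classical
  have hfib : ∀ e ∈ (suppF m).image (fun v => s(v, m v)),
      ((suppF m).filter (fun x => s(x, m x) = e)).card = 2 := by
    intro e he
    obtain ⟨v, hv, rfl⟩ := Finset.mem_image.1 he
    have hmv : m v ≠ v := mem_suppF.1 hv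
    have : (suppF m).filter (fun x => s(x, m x) = s(v, m v)) = {v, m v} := by
      ext x
      simp only [Finset.mem_filter, mem_suppF, Finset.mem_insert, Finset.mem_singleton]
      constructor
      · rintro ⟨hx, he⟩
        rw [Sym2.eq_iff] at he
        rcases he with ⟨rfl, _⟩ | ⟨h1, h2⟩
        · exact Or.inl rfl
        · exact Or.inr h1
      · rintro (rfl | rfl)
        · exact ⟨hmv, rfl⟩
        · refine ⟨by rw [h v]; exact fun hh => hmv hh.symm, ?_⟩
          rw [h v, Sym2.eq_swap]
    rw [this, Finset.card_insert_of_notMem (by simpa using hmv.symm), Finset.card_singleton]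
  have := Finset.card_eq_sum_card_image (fun v => s(v, m v)) (suppF m)
  rw [Finset.sum_congr rfl hfib, Finset.sum_const, smul_eq_mul] at this
  exact ⟨((suppF m).image (fun v => s(v, m v))).card, by omega⟩

lemma even_nuv (s : Finset V) : Even (nuv G s) := by
  obtain ⟨m, hm, hc⟩ := exists_max_matching (G := G) s
  rw [← hc]; exact even_suppF_card hm.1



section Count

/-- Number of edges of `G` inside `s`. -/
def Esize (G : SimpleGraph V) [DecidableRel G.Adj] (s : Finset V) : ℕ :=
  (CH.Rg G s).edgeFinset.card

lemma Rg_degree_le (s : Finset V) (v : V) : (Rg G s).degree v ≤ G.degree v := by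
  apply Finset.card_le_card
  intro w hw
  rw [SimpleGraph.mem_neighborFinset] at hw ⊢
  exact hw.1

lemma Rg_degree_eq_zero {s : Finset V} {v : V} (hv : v ∉ s) : (Rg G s).degree v = 0 := by
  rw [SimpleGraph.degree, Finset.card_eq_zero]
  ext w
  simp only [SimpleGraph.mem_neighborFinset, Finset.notMem_empty, iff_false]
  rintro ⟨-, hvs, -⟩
  exact hv hvs

lemma Rg_degree_le_card {s : Finset V} {v : V} (hv : v ∈ s) :
    (Rg G s).degree v ≤ s.card - 1 := by
  have : (Rg G s).neighborFinset v ⊆ s.erase v := by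
    intro w hw
    rw [SimpleGraph.mem_neighborFinset] at hw
    exact Finset.mem_erase.2 ⟨hw.1.ne', hw.2.2⟩
  calc (Rg G s).degree v ≤ (s.erase v).card := Finset.card_le_card this
    _ = s.card - 1 := Finset.card_erase_of_mem hv

lemma two_Esize_le_sum (s : Finset V) :
    2 * Esize G s = ∑ v ∈ s, (Rg G s).degree v := by
  rw [Esize, ← SimpleGraph.sum_degrees_eq_twice_card_edges]
  rw [← Finset.sum_subset (Finset.subset_univ s)]
  intro v _ hv
  exact Rg_degree_eq_zero hv

lemma two_Esize_le_deg {Δ : ℕ} (hdeg : ∀ v, G.degree v ≤ Δ) (s : Finset V) :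
    2 * Esize G s ≤ s.card * Δ := by
  rw [two_Esize_le_sum]
  calc ∑ v ∈ s, (Rg G s).degree v ≤ ∑ v ∈ s, Δ :=
        Finset.sum_le_sum fun v _ => (Rg_degree_le s v).trans (hdeg v)
    _ = s.card * Δ := by rw [Finset.sum_const, smul_eq_mul]

lemma two_Esize_le_sq (s : Finset V) : 2 * Esize G s ≤ s.card * (s.card - 1) := by
  rw [two_Esize_le_sum]
  calc ∑ v ∈ s, (Rg G s).degree v ≤ ∑ _v ∈ s, (s.card - 1) :=
        Finset.sum_le_sum fun v hv => Rg_degree_le_card hv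
    _ = s.card * (s.card - 1) := by rw [Finset.sum_const, smul_eq_mul]

lemma Rg_mono {s t : Finset V} (hst : s ⊆ t) : Rg G s ≤ Rg G t :=
  fun _ _ h => ⟨h.1, hst h.2.1, hst h.2.2⟩

lemma Esize_erase_le {s : Finset V} (v : V) {Δ : ℕ} (hdeg : ∀ v, G.degree v ≤ Δ) :
    Esize G s ≤ Esize G (s.erase v) + Δ := by
  have hsub : (Rg G s).edgeFinset ⊆ (Rg G (s.erase v)).edgeFinset ∪ (Rg G s).incidenceFinset v := by
    intro e he
    induction e with
    | h a b =>
      rw [SimpleGraph.mem_edgeFinset, SimpleGraph.mem_edgeSet] at he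
      rw [Finset.mem_union]
      by_cases hav : a = v
      · exact Or.inr (by rw [SimpleGraph.mem_incidenceFinset]; exact ⟨(SimpleGraph.mem_edgeSet _).2 he, by simp [hav]⟩)
      by_cases hbv : b = v
      · exact Or.inr (by rw [SimpleGraph.mem_incidenceFinset]; exact ⟨(SimpleGraph.mem_edgeSet _).2 he, by simp [hbv]⟩)
      · refine Or.inl ?_
        rw [SimpleGraph.mem_edgeFinset, SimpleGraph.mem_edgeSet]
        exact ⟨he.1, Finset.mem_erase.2 ⟨hav, he.2.1⟩, Finset.mem_erase.2 ⟨hbv, he.2.2⟩⟩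
  calc Esize G s ≤ (Rg G (s.erase v)).edgeFinset.card + ((Rg G s).incidenceFinset v).card :=
        (Finset.card_le_card hsub).trans (Finset.card_union_le _ _)
    _ ≤ Esize G (s.erase v) + Δ := by
        rw [SimpleGraph.card_incidenceFinset_eq_degree]
        exact Nat.add_le_add_left ((Rg_degree_le s v).trans (hdeg v)) _

end Count

section MatchOps

/-- Augmenting a matching by an edge between two exposed vertices. -/
lemma augment_pair {s : Finset V} {m : V → V} (hm : IsM G s m) {u w : V}
    (hu : m u = u) (hw : m w = w) (huw : u ≠ w) (hus : u ∈ s) (hws : w ∈ s)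
    (hadj : G.Adj u w) :
    ∃ m', IsM G s m' ∧ (suppF m').card = (suppF m).card + 2 := by
  set m' : V → V := fun v => if v = u then w else if v = w then u else m v with hm'
  have hmu : ∀ v, v ≠ u → v ≠ w → m v ≠ u ∧ m v ≠ w := by
    intro v hvu hvw
    constructor
    · intro h; exact hvu (by rw [← hm.1 v, h, hu])
    · intro h; exact hvw (by rw [← hm.1 v, h, hw])
  have hval : ∀ v, v ≠ u → v ≠ w → m' v = m v := by
    intro v h1 h2; simp [hm', h1, h2]
  have h'u : m' u = w := by simp [hm']
  have h'w : m' w = u := by simp [hm', huw.symm]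
  have hinv : Involutive m' := by
    intro v
    rcases eq_or_ne v u with rfl | hvu
    · rw [h'u, h'w]
    rcases eq_or_ne v w with rfl | hvw
    · rw [h'w, h'u]
    · rw [hval v hvu hvw, hval _ (hmu v hvu hvw).1 (hmu v hvu hvw).2, hm.1 v]
  refine ⟨m', ⟨hinv, ?_⟩, ?_⟩
  · intro v hv
    rcases eq_or_ne v u with rfl | hvu
    · rw [h'u]; exact ⟨hadj, hus⟩
    rcases eq_or_ne v w with rfl | hvw
    · rw [h'w]; exact ⟨hadj.symm, hws⟩
    · rw [hval v hvu hvw] at hv ⊢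
      exact hm.2 v hv
  · have : suppF m' = insert u (insert w (suppF m)) := by
      ext v
      simp only [mem_suppF, Finset.mem_insert]
      rcases eq_or_ne v u with rfl | hvu
      · simp [h'u, huw.symm]
      rcases eq_or_ne v w with rfl | hvw
      · simp [h'w, huw]
      · rw [hval v hvu hvw]
        simp [hvu, hvw]
    rw [this, Finset.card_insert_of_notMem, Finset.card_insert_of_notMem]
    · simp [mem_suppF, hw]
    · simp only [Finset.mem_insert, mem_suppF, not_or]
      exact ⟨huw, by simp [hu]⟩

/-- Combining matchings on disjoint vertex sets. -/
lemma combine_matchings {s1 s2 : Finset V} (hdis : Disjoint s1 s2) {m1 m2 : V → V}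
    (h1 : IsM G s1 m1) (h2 : IsM G s2 m2) :
    ∃ m, IsM G (s1 ∪ s2) m ∧ (suppF m).card = (suppF m1).card + (suppF m2).card := by
  set m : V → V := fun v => if v ∈ s1 then m1 v else m2 v with hmdef
  have hv1 : ∀ v ∈ s1, m v = m1 v := fun v hv => by simp [hmdef, hv]
  have hv2 : ∀ v ∉ s1, m v = m2 v := fun v hv => by simp [hmdef, hv]
  have hs1cl : ∀ v ∈ s1, m1 v ∈ s1 ∨ m1 v = v := by
    intro v hv
    rcases eq_or_ne (m1 v) v with h | h
    · exact Or.inr h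
    · left
      exact (h1.2 (m1 v) (by rw [h1.1 v]; exact fun hh => h hh.symm)).2
  have hs2cl : ∀ v ∉ s1, m2 v ∉ s1 := by
    intro v hv
    rcases eq_or_ne (m2 v) v with h | h
    · rw [h]; exact hv
    · have hmem : m2 v ∈ s2 := (h2.2 (m2 v) (by rw [h2.1 v]; exact fun hh => h hh.symm)).2
      exact fun hc => (Finset.disjoint_left.1 hdis hc) hmem
  have hfix1 : ∀ v ∈ s1, m1 v = v → m v = v := fun v hv h => by rw [hv1 v hv, h]
  have hinv : Involutive m := by
    intro v
    by_cases hv : v ∈ s1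
    · rw [hv1 v hv]
      rcases hs1cl v hv with h | h
      · rw [hv1 _ h, h1.1 v]
      · rw [h, hv1 v hv, h]
    · rw [hv2 v hv, hv2 _ (hs2cl v hv), h2.1 v]
  have hsupp : suppF m = suppF m1 ∪ suppF m2 := by
    ext v
    simp only [mem_suppF, Finset.mem_union]
    by_cases hv : v ∈ s1
    · rw [hv1 v hv]
      constructor
      · exact fun h => Or.inl h
      · rintro (h | h)
        · exact h
        · exfalso
          exact (Finset.disjoint_left.1 hdis hv) (h2.2 v h).2
    · rw [hv2 v hv]
      constructor
      · exact fun h => Or.inr h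
      · rintro (h | h)
        · exact absurd (h1.2 v h).2 hv
        · exact h
  refine ⟨m, ⟨hinv, ?_⟩, ?_⟩
  · intro v hv
    by_cases h : v ∈ s1
    · rw [hv1 v h] at hv ⊢
      exact ⟨(h1.2 v hv).1, Finset.mem_union_left _ (h1.2 v hv).2⟩
    · rw [hv2 v h] at hv ⊢
      exact ⟨(h2.2 v hv).1, Finset.mem_union_right _ (h2.2 v hv).2⟩
  · rw [hsupp, Finset.card_union_of_disjoint]
    exact Finset.disjoint_left.2 fun v h1' h2' =>
      (Finset.disjoint_left.1 hdis (h1.2 v (mem_suppF.1 h1')).2) (h2.2 v (mem_suppF.1 h2')).2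

lemma nuv_superadd {s1 s2 : Finset V} (hdis : Disjoint s1 s2) :
    nuv G s1 + nuv G s2 ≤ nuv G (s1 ∪ s2) := by
  obtain ⟨m1, h1, hc1⟩ := exists_max_matching (G := G) s1
  obtain ⟨m2, h2, hc2⟩ := exists_max_matching (G := G) s2
  obtain ⟨m, hm, hc⟩ := combine_matchings hdis h1 h2
  rw [← hc1, ← hc2, ← hc]
  exact le_nuv hm

/-- If there are no `G`-edges between `s1` and `s2 = s \ s1`, the edges split. -/
lemma Esize_split {s s1 : Finset V} (hsub : s1 ⊆ s)
    (hcross : ∀ u ∈ s1, ∀ v ∈ s \ s1, ¬G.Adj u v) :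
    Esize G s = Esize G s1 + Esize G (s \ s1) := by
  have hdisj : Disjoint (Rg G s1).edgeFinset (Rg G (s \ s1)).edgeFinset := by
    rw [Finset.disjoint_left]
    intro e he1 he2
    induction e with
    | h a b =>
      rw [SimpleGraph.mem_edgeFinset, SimpleGraph.mem_edgeSet] at he1 he2
      exact (Finset.mem_sdiff.1 he2.2.1).2 he1.2.1
  have hunion : (Rg G s).edgeFinset = (Rg G s1).edgeFinset ∪ (Rg G (s \ s1)).edgeFinset := by
    ext e
    induction e with
    | h a b =>
      simp only [Finset.mem_union, SimpleGraph.mem_edgeFinset, SimpleGraph.mem_edgeSet]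
      constructor
      · rintro ⟨hab, has, hbs⟩
        by_cases ha1 : a ∈ s1
        · by_cases hb1 : b ∈ s1
          · exact Or.inl ⟨hab, ha1, hb1⟩
          · exact absurd hab (hcross a ha1 b (Finset.mem_sdiff.2 ⟨hbs, hb1⟩))
        · by_cases hb1 : b ∈ s1
          · exact absurd hab.symm (hcross b hb1 a (Finset.mem_sdiff.2 ⟨has, ha1⟩))
          · exact Or.inr ⟨hab, Finset.mem_sdiff.2 ⟨has, ha1⟩, Finset.mem_sdiff.2 ⟨hbs, hb1⟩⟩
      · rintro (⟨hab, h1, h2⟩ | ⟨hab, h1, h2⟩)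
        · exact ⟨hab, hsub h1, hsub h2⟩
        · exact ⟨hab, (Finset.mem_sdiff.1 h1).1, (Finset.mem_sdiff.1 h2).1⟩
  rw [Esize, hunion, Finset.card_union_of_disjoint hdisj]; rfl

end MatchOps
section Path

variable {m n : V → V} {u : V}

/-- The alternating path sequence starting at `u`: alternately apply `n` and `m`. -/
def pathSeq (m n : V → V) (u : V) : ℕ → V
  | 0 => u
  | (i + 1) => if Even i then n (pathSeq m n u i) else m (pathSeq m n u i)

lemma pathSeq_succ (m n : V → V) (u : V) (i : ℕ) :
    pathSeq m n u (i + 1) = if Even i then n (pathSeq m n u i) else m (pathSeq m n u i) := rfl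

lemma pathSeq_inj (hm : Involutive m) (hn : Involutive n) (hum : m u = u)
    {J : ℕ} (hstep : ∀ i, i < J → pathSeq m n u (i + 1) ≠ pathSeq m n u i) :
    ∀ b, b ≤ J → ∀ a, a < b → pathSeq m n u a ≠ pathSeq m n u b := by
  set x := pathSeq m n u with hx
  have xsucc : ∀ i, x (i + 1) = if Even i then n (x i) else m (x i) := fun i => rfl
  have xback : ∀ i, x i = if Even i then n (x (i + 1)) else m (x (i + 1)) := by
    intro i
    rw [xsucc i]
    by_cases h : Even i
    · simp only [if_pos h, hn (x i)]
    · simp only [if_neg h, hm (x i)]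
  intro b
  induction b using Nat.strong_induction_on with
  | _ b IH =>
    intro hbJ a hab heq
    by_cases hpar : (a % 2 = b % 2)
    · -- same parity
      rcases Nat.eq_zero_or_pos a with rfl | ha
      · -- a = 0, b even, b ≥ 2
        have hbe : Even b := by rw [Nat.even_iff]; omega
        obtain ⟨b', rfl⟩ : ∃ b', b = b' + 1 := ⟨b - 1, by omega⟩
        have hb'o : ¬ Even b' := by
          rw [Nat.even_add_one] at hbe; exact fun h => hbe h
        have h2 : x b' = m (x (b' + 1)) := by
          conv_lhs => rw [xback b', if_neg hb'o]
        have hb'0 : 0 < b' := by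
          rcases Nat.eq_zero_or_pos b' with rfl | h
          · exact absurd (⟨0, rfl⟩ : Even 0) hb'o
          · exact h
        exact IH b' (by omega) (by omega) 0 hb'0 (by rw [h2, ← heq]; exact hum.symm)
      · obtain ⟨a', rfl⟩ : ∃ a', a = a' + 1 := ⟨a - 1, by omega⟩
        obtain ⟨b', rfl⟩ : ∃ b', b = b' + 1 := ⟨b - 1, by omega⟩
        have hpar' : Even a' ↔ Even b' := by
          constructor <;> intro h <;> [skip; skip] <;>
          · rw [Nat.even_iff] at *; omega
        have : x a' = x b' := by
          by_cases h : Even a'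
          · rw [xback a', if_pos h, xback b', if_pos (hpar'.1 h), heq]
          · rw [xback a', if_neg h, xback b', if_neg (fun hh => h (hpar'.2 hh)), heq]
        exact IH b' (by omega) (by omega) a' (by omega) this
    · -- different parity
      rcases eq_or_lt_of_le (Nat.succ_le_of_lt hab) with hb1 | hb2
      · -- b = a + 1
        exact hstep a (by omega) (by rw [show a + 1 = b from hb1, heq])
      · -- b ≥ a + 2, and parity differs so b ≥ a + 3
        obtain ⟨b', rfl⟩ : ∃ b', b = b' + 1 := ⟨b - 1, by omega⟩
        have hb'a : a + 1 < b' := by omega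
        have hpar' : Even a ↔ Even b' := by
          constructor <;> intro h <;> [skip; skip] <;>
          · rw [Nat.even_iff] at *; omega
        have : x (a + 1) = x b' := by
          by_cases h : Even a
          · rw [xsucc a, if_pos h, xback b', if_pos (hpar'.1 h), ← heq]
          · rw [xsucc a, if_neg h, xback b', if_neg (fun hh => h (hpar'.2 hh)), ← heq]
        exact IH b' (by omega) (by omega) (a + 1) hb'a this
  
lemma pathSeq_terminates (hm : Involutive m) (hn : Involutive n) (hum : m u = u) :
    ∃ i, pathSeq m n u (i + 1) = pathSeq m n u i := by
  by_contra hc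
  push_neg at hc
  have hinj := pathSeq_inj hm hn hum (J := Fintype.card V + 1) (fun i _ => hc i)
  have : Function.Injective (fun i : Fin (Fintype.card V + 2) => pathSeq m n u i) := by
    intro i j hij
    by_contra hne
    rcases Ne.lt_or_gt hne with h | h
    · exact hinj j (by omega) i (by exact_mod_cast h) hij
    · exact hinj i (by omega) j (by exact_mod_cast h) hij.symm
  have := Fintype.card_le_of_injective _ this
  rw [Fintype.card_fin] at this
  omega

end Path
section Swap

/-- Swapping two matchings along a closed set of vertices. -/
lemma swap_matching {s : Finset V} {m n : V → V} (hm : IsM G s m) (hn : IsM G s n)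
    {P : Finset V} (hmP : ∀ v ∈ P, m v ∈ P) (hnP : ∀ v ∈ P, n v ∈ P) :
    IsM G s (fun v => if v ∈ P then n v else m v) := by
  have hmPc : ∀ v, v ∉ P → m v ∉ P := by
    intro v hv hc
    exact hv (by rw [← hm.1 v]; exact hmP _ hc)
  constructor
  · intro v
    by_cases hv : v ∈ P
    · simp only [if_pos hv, if_pos (hnP v hv)]
      exact hn.1 v
    · simp only [if_neg hv, if_neg (hmPc v hv)]
      exact hm.1 v
  · intro v hv
    by_cases h : v ∈ P
    · simp only [if_pos h] at hv ⊢
      exact hn.2 v hv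
    · simp only [if_neg h] at hv ⊢
      exact hm.2 v hv

lemma swap_supp_card {m n : V → V} {P : Finset V} {a b : V}
    (ha : a ∈ P) (hb : b ∈ P)
    (hmfix : ∀ v ∈ P, (m v = v ↔ v = a)) (hnfix : ∀ v ∈ P, (n v = v ↔ v = b)) :
    (suppF (fun v => if v ∈ P then n v else m v)).card = (suppF m).card := by
  have h1 : suppF (fun v => if v ∈ P then n v else m v) = (suppF m \ P) ∪ P.erase b := by
    ext v
    simp only [mem_suppF, Finset.mem_union, Finset.mem_sdiff, Finset.mem_erase]
    by_cases hv : v ∈ P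
    · rw [if_pos hv]
      constructor
      · intro h
        exact Or.inr ⟨fun hb' => h ((hnfix v hv).2 hb'), hv⟩
      · rintro (⟨-, hnp⟩ | ⟨hne, -⟩)
        · exact absurd hv hnp
        · exact fun h => hne ((hnfix v hv).1 h)
    · rw [if_neg hv]
      constructor
      · intro h; exact Or.inl ⟨h, hv⟩
      · rintro (⟨h, -⟩ | ⟨-, hP⟩)
        · exact h
        · exact absurd hP hv
  have h2 : suppF m = (suppF m \ P) ∪ P.erase a := by
    ext v
    simp only [mem_suppF, Finset.mem_union, Finset.mem_sdiff, Finset.mem_erase]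
    by_cases hv : v ∈ P
    · constructor
      · intro h
        exact Or.inr ⟨fun ha' => h ((hmfix v hv).2 ha'), hv⟩
      · rintro (⟨-, hnp⟩ | ⟨hne, -⟩)
        · exact absurd hv hnp
        · exact fun h => hne ((hmfix v hv).1 h)
    · constructor
      · intro h; exact Or.inl ⟨h, hv⟩
      · rintro (⟨h, -⟩ | ⟨-, hP⟩)
        · exact h
        · exact absurd hP hv
  have hd1 : Disjoint (suppF m \ P) (P.erase b) :=
    Finset.disjoint_left.2 fun v hv hv' =>
      (Finset.mem_sdiff.1 hv).2 (Finset.mem_of_mem_erase hv')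
  have hd2 : Disjoint (suppF m \ P) (P.erase a) :=
    Finset.disjoint_left.2 fun v hv hv' =>
      (Finset.mem_sdiff.1 hv).2 (Finset.mem_of_mem_erase hv')
  rw [h1, Finset.card_union_of_disjoint hd1]
  conv_rhs => rw [h2, Finset.card_union_of_disjoint hd2]
  rw [Finset.card_erase_of_mem ha, Finset.card_erase_of_mem hb]

/-- The alternating path lemma: given a maximum matching `m` exposing `u` and another
matching `n` covering `u`, there is an alternating path from `u` ending at a vertex `z`
exposed by `n`. -/
lemma path_lemma {s : Finset V} {m n : V → V} (hm : IsM G s m) (hn : IsM G s n)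
    (hmmax : ∀ m₂, IsM G s m₂ → (suppF m₂).card ≤ (suppF m).card)
    {u : V} (hum : m u = u) (hun : n u ≠ u) :
    ∃ (P : Finset V) (z : V), u ∈ P ∧ z ∈ P ∧ z ≠ u ∧ n z = z ∧
      (∀ v ∈ P, m v ∈ P) ∧ (∀ v ∈ P, n v ∈ P) ∧
      (∀ v ∈ P, (m v = v ↔ v = u)) ∧ (∀ v ∈ P, (n v = v ↔ v = z)) ∧
      (∀ v ∈ P, v ≠ u → v ≠ z → m v ≠ n v) := by
  classical
  set x := pathSeq m n u with hxdef
  have xsucc : ∀ i, x (i + 1) = if Even i then n (x i) else m (x i) := fun i => rfl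
  have x0 : x 0 = u := rfl
  have hex := pathSeq_terminates (u := u) hm.1 hn.1 hum
  set J := Nat.find hex with hJdef
  have hJstop : x (J + 1) = x J := Nat.find_spec hex
  have hJmin : ∀ i, i < J → x (i + 1) ≠ x i := fun i hi => Nat.find_min hex hi
  have hJ0 : 0 < J := by
    rcases Nat.eq_zero_or_pos J with h | h
    · exfalso
      apply hun
      have := hJstop
      rw [h] at this
      rw [xsucc 0, if_pos (by decide : Even 0), x0] at this
      exact this
    · exact h
  have hinj : ∀ a b : ℕ, a < b → b ≤ J → x a ≠ x b :=
    fun a b hab hbJ => pathSeq_inj hm.1 hn.1 hum hJmin b hbJ a hab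
  -- partner computations
  have pmodd : ∀ j, ¬ Even j → j < J → m (x j) = x (j + 1) := by
    intro j hj hjJ
    rw [xsucc j, if_neg hj]
  have pmeven : ∀ j, Even j → 0 < j → m (x j) = x (j - 1) := by
    intro j hj hj0
    obtain ⟨j', rfl⟩ : ∃ j', j = j' + 1 := ⟨j - 1, by omega⟩
    have hj'o : ¬ Even j' := by rw [Nat.even_add_one] at hj; exact fun h => hj h
    rw [xsucc j', if_neg hj'o, hm.1, Nat.add_sub_cancel]
  have pnodd : ∀ j, ¬ Even j → n (x j) = x (j - 1) := by
    intro j hj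
    have hj1 : j % 2 = 1 := Nat.not_even_iff.1 hj
    obtain ⟨j', rfl⟩ : ∃ j', j = j' + 1 := ⟨j - 1, by omega⟩
    have hj'e : Even j' := by
      rw [Nat.even_add_one] at hj; simpa using hj
    rw [xsucc j', if_pos hj'e, hn.1, Nat.add_sub_cancel]
  have pneven : ∀ j, Even j → j < J → n (x j) = x (j + 1) := by
    intro j hj hjJ
    rw [xsucc j, if_pos hj]
  set P : Finset V := (Finset.range (J + 1)).image x with hPdef
  have hmemP : ∀ v, v ∈ P ↔ ∃ j, j ≤ J ∧ x j = v := by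
    intro v
    simp only [hPdef, Finset.mem_image, Finset.mem_range]
    constructor
    · rintro ⟨j, hj, rfl⟩; exact ⟨j, by omega, rfl⟩
    · rintro ⟨j, hj, rfl⟩; exact ⟨j, by omega, rfl⟩
  have hxmem : ∀ j, j ≤ J → x j ∈ P := fun j hj => (hmemP _).2 ⟨j, hj, rfl⟩
  have huP : u ∈ P := hxmem 0 (by omega)
  by_cases hJe : Even J
  case neg =>
    -- J odd: m (x J) = x J, augmenting path, contradiction with maximality of m
    exfalso
    have hstopm : m (x J) = x J := by
      have := hJstop
      rw [xsucc J, if_neg hJe] at this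
      exact this
    have hnP : ∀ v ∈ P, n v ∈ P ∧ n v ≠ v := by
      intro v hv
      obtain ⟨j, hjJ, rfl⟩ := (hmemP v).1 hv
      by_cases hj : Even j
      · have hjJ' : j < J := by
          rcases eq_or_lt_of_le hjJ with rfl | h
          · exact absurd hj hJe
          · exact h
        rw [pneven j hj hjJ']
        exact ⟨hxmem _ (by omega), fun h => hinj j (j + 1) (by omega) (by omega) h.symm⟩
      · rw [pnodd j hj]
        have hj0 : 0 < j := by
          rcases Nat.eq_zero_or_pos j with rfl | h
          · exact absurd (⟨0, rfl⟩ : Even 0) hj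
          · exact h
        exact ⟨hxmem _ (by omega), fun h => hinj (j - 1) j (by omega) hjJ h⟩
    have hmP : ∀ v ∈ P, m v ∈ P := by
      intro v hv
      obtain ⟨j, hjJ, rfl⟩ := (hmemP v).1 hv
      rcases Nat.eq_zero_or_pos j with rfl | hj0
      · rw [x0, hum]; exact hv
      by_cases hj : Even j
      · rw [pmeven j hj hj0]; exact hxmem _ (by omega)
      · rcases eq_or_lt_of_le hjJ with rfl | h
        · rw [hstopm]; exact hv
        · rw [pmodd j hj h]; exact hxmem _ (by omega)
    set m' : V → V := fun v => if v ∈ P then n v else m v with hm'def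
    have hm' : IsM G s m' := swap_matching hm hn hmP (fun v hv => (hnP v hv).1)
    have hsub : suppF m ⊆ suppF m' := by
      intro v hv
      rw [mem_suppF] at hv ⊢
      by_cases h : v ∈ P
      · simp only [hm'def, if_pos h]; exact (hnP v h).2
      · simp only [hm'def, if_neg h]; exact hv
    have huP' : u ∈ suppF m' := by
      rw [mem_suppF]
      simp only [hm'def, if_pos huP]
      exact hun
    have hunotm : u ∉ suppF m := by rw [mem_suppF]; simp [hum]
    have : (suppF m).card + 1 ≤ (suppF m').card := by
      have : insert u (suppF m) ⊆ suppF m' := Finset.insert_subset huP' hsub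
      calc (suppF m).card + 1 = (insert u (suppF m)).card :=
            (Finset.card_insert_of_notMem hunotm).symm
        _ ≤ (suppF m').card := Finset.card_le_card this
    have := hmmax m' hm'
    omega
  case pos =>
    -- J even: end of path z = x J is n-exposed
    have hstopn : n (x J) = x J := by
      have := hJstop
      rw [xsucc J, if_pos hJe] at this
      exact this
    refine ⟨P, x J, huP, hxmem J le_rfl, fun h => hinj 0 J hJ0 le_rfl h.symm, hstopn,
      ?_, ?_, ?_, ?_, ?_⟩
    · -- m closure
      intro v hv
      obtain ⟨j, hjJ, rfl⟩ := (hmemP v).1 hv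
      rcases Nat.eq_zero_or_pos j with rfl | hj0
      · rw [x0, hum]; exact hv
      by_cases hj : Even j
      · rw [pmeven j hj hj0]; exact hxmem _ (by omega)
      · have hjJ' : j < J := by
          rcases eq_or_lt_of_le hjJ with rfl | h
          · exact absurd hJe hj
          · exact h
        rw [pmodd j hj hjJ']; exact hxmem _ (by omega)
    · -- n closure
      intro v hv
      obtain ⟨j, hjJ, rfl⟩ := (hmemP v).1 hv
      by_cases hj : Even j
      · rcases eq_or_lt_of_le hjJ with rfl | h
        · rw [hstopn]; exact hv
        · rw [pneven j hj h]; exact hxmem _ (by omega)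
      · have hj0 : 0 < j := by
          rcases Nat.eq_zero_or_pos j with rfl | h
          · exact absurd (⟨0, rfl⟩ : Even 0) hj
          · exact h
        rw [pnodd j hj]; exact hxmem _ (by omega)
    · -- m-fixed iff u
      intro v hv
      obtain ⟨j, hjJ, rfl⟩ := (hmemP v).1 hv
      constructor
      · intro hfix
        rcases Nat.eq_zero_or_pos j with rfl | hj0
        · exact x0
        exfalso
        by_cases hj : Even j
        · rw [pmeven j hj hj0] at hfix
          exact hinj (j - 1) j (by omega) hjJ hfix
        · have hjJ' : j < J := by
            rcases eq_or_lt_of_le hjJ with rfl | h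
            · exact absurd hJe hj
            · exact h
          rw [pmodd j hj hjJ'] at hfix
          exact hinj j (j + 1) (by omega) (by omega) hfix.symm
      · intro h; rw [h, hum]
    · -- n-fixed iff z
      intro v hv
      obtain ⟨j, hjJ, rfl⟩ := (hmemP v).1 hv
      constructor
      · intro hfix
        by_cases hj : Even j
        · rcases eq_or_lt_of_le hjJ with rfl | h
          · rfl
          · exfalso
            rw [pneven j hj h] at hfix
            exact hinj j (j + 1) (by omega) (by omega) hfix.symm
        · exfalso
          have hj0 : 0 < j := by
            rcases Nat.eq_zero_or_pos j with rfl | h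
            · exact absurd (⟨0, rfl⟩ : Even 0) hj
            · exact h
          rw [pnodd j hj] at hfix
          exact hinj (j - 1) j (by omega) hjJ hfix
      · intro h; rw [h, hstopn]
    · -- interior vertices have distinct partners
      intro v hv hvu hvz
      obtain ⟨j, hjJ, rfl⟩ := (hmemP v).1 hv
      have hj0 : 0 < j := by
        rcases Nat.eq_zero_or_pos j with rfl | h
        · exact absurd x0 hvu
        · exact h
      have hjJ' : j < J := by
        rcases eq_or_lt_of_le hjJ with rfl | h
        · exact absurd rfl hvz
        · exact h
      by_cases hj : Even j
      · rw [pmeven j hj hj0, pneven j hj hjJ']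
        exact fun h => hinj (j - 1) (j + 1) (by omega) (by omega) h
      · rw [pmodd j hj hjJ', pnodd j hj]
        exact fun h => hinj (j - 1) (j + 1) (by omega) (by omega) h.symm

end Swap
section Gallai

/-- Gallai's lemma (key step): in a connected graph where every vertex is avoidable
by some maximum matching, any maximum matching exposes at most one vertex. -/
lemma gallai {s : Finset V}
    (hconn : ∀ u ∈ s, ∀ w ∈ s, (Rg G s).Reachable u w)
    (havoid : ∀ v ∈ s, ∃ nm, IsM G s nm ∧ (suppF nm).card = nuv G s ∧ nm v = v)
    {m : V → V} (hm : IsM G s m) (hmc : (suppF m).card = nuv G s) :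
    (s.filter (fun v => m v = v)).card ≤ 1 := by
  classical
  by_contra hcon
  push_neg at hcon
  rw [Finset.one_lt_card] at hcon
  obtain ⟨u0, hu0, w0, hw0, huw0⟩ := hcon
  simp only [Finset.mem_filter] at hu0 hw0
  set Pd : ℕ → Prop := fun d => ∃ (mm : V → V) (u w : V), IsM G s mm ∧
    (suppF mm).card = nuv G s ∧ u ∈ s ∧ w ∈ s ∧ mm u = u ∧ mm w = w ∧ u ≠ w ∧
    (Rg G s).dist u w = d with hPd
  have hPex : ∃ d, Pd d :=
    ⟨_, m, u0, w0, hm, hmc, hu0.1, hw0.1, hu0.2, hw0.2, huw0, rfl⟩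
  set d0 := Nat.find hPex with hd0
  have hmin : ∀ d', d' < d0 → ¬ Pd d' := fun d' hd' => Nat.find_min hPex hd'
  have hspec : Pd d0 := Nat.find_spec hPex
  clear_value d0
  obtain ⟨m, u, w, hm, hmc, hus, hws, hmu, hmw, huw, hdist⟩ := hspec
  have hreach : (Rg G s).Reachable u w := hconn u hus w hws
  obtain ⟨p, hp⟩ := hreach.exists_walk_length_eq_dist
  rw [hdist] at hp
  -- d0 ≥ 2
  have hd2 : 2 ≤ d0 := by
    by_contra hlt
    push_neg at hlt
    interval_cases d0
    · exact huw (p.eq_of_length_eq_zero hp)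
    · have hadj : (Rg G s).Adj u w := p.adj_of_length_eq_one hp
      obtain ⟨m2, hm2, hc2⟩ := augment_pair hm hmu hmw huw hus hws hadj.1
      have := le_nuv hm2
      omega
  -- decompose the walk
  cases p with
  | nil => simp at hp; omega
  | @cons u t w hadj q =>
    simp only [SimpleGraph.Walk.length_cons] at hp
    have hts : t ∈ s := hadj.2.2
    have hut : u ≠ t := hadj.1.ne
    have hdut : (Rg G s).dist u t ≤ 1 := by
      have := SimpleGraph.dist_le (SimpleGraph.Walk.cons hadj SimpleGraph.Walk.nil)
      simpa using this
    have hdtw : (Rg G s).dist t w ≤ d0 - 1 := by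
      have := SimpleGraph.dist_le q
      omega
    have htw : t ≠ w := by
      intro h
      rw [← h] at hdist
      omega
    -- m covers t
    have hmt : m t ≠ t := by
      intro hfix
      exact hmin ((Rg G s).dist u t) (by omega)
        ⟨m, u, t, hm, hmc, hus, hts, hmu, hfix, hut, rfl⟩
    -- pick n : maximum matching missing t, maximizing agreement with m
    set Agr : (V → V) → ℕ := fun h => (univ.filter (fun v => h v = m v ∧ m v ≠ v)).card
      with hAgr
    set C : Finset (V → V) := univ.filter
      (fun nn => IsM G s nn ∧ (suppF nn).card = nuv G s ∧ nn t = t) with hC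
    have hCne : C.Nonempty := by
      obtain ⟨nm, h1, h2, h3⟩ := havoid t hts
      exact ⟨nm, by simp [hC, h1, h2, h3]⟩
    obtain ⟨n, hnC, hnmax⟩ := Finset.exists_max_image C Agr hCne
    simp only [hC, Finset.mem_filter, Finset.mem_univ, true_and] at hnC
    obtain ⟨hn, hnc, hnt⟩ := hnC
    -- n covers u and w
    have hnu : n u ≠ u := by
      intro hfix
      exact hmin ((Rg G s).dist t u) (by rw [SimpleGraph.dist_comm]; omega)
        ⟨n, t, u, hn, hnc, hts, hus, hnt, hfix, fun h => hut h.symm, rfl⟩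
    have hnw : n w ≠ w := by
      intro hfix
      exact hmin ((Rg G s).dist t w) (by omega)
        ⟨n, t, w, hn, hnc, hts, hws, hnt, hfix, htw, rfl⟩
    -- alternating path
    have hmmax : ∀ m₂, IsM G s m₂ → (suppF m₂).card ≤ (suppF m).card := by
      intro m₂ h₂
      rw [hmc]
      exact le_nuv h₂
    obtain ⟨P, z, hPu, hPz, hzu, hnz, hmP, hnP, hmfix, hnfix, hdiff⟩ :=
      path_lemma hm hn hmmax hmu hnu
    have hwP : w ∉ P := by
      intro hw
      exact huw ((hmfix w hw).1 hmw).symm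
    by_cases hzt : z = t
    · -- swap m along P: new maximum matching missing w and t
      set m'' : V → V := fun v => if v ∈ P then n v else m v with hm''
      have hism : IsM G s m'' := swap_matching hm hn hmP hnP
      have hcard : (suppF m'').card = nuv G s := by
        rw [hm'', swap_supp_card hPu hPz hmfix hnfix, hmc]
      have hm''w : m'' w = w := by simp only [hm'', if_neg hwP]; exact hmw
      have hm''t : m'' t = t := by
        subst hzt
        simp only [hm'', if_pos hPz]; exact hnz
      exact hmin ((Rg G s).dist w t)
        (by rw [SimpleGraph.dist_comm]; omega)
        ⟨m'', w, t, hism, hcard, hws, hts, hm''w, hm''t, fun h => htw h.symm, rfl⟩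
    · -- swap n along P: same agreement contradiction
      have htP : t ∉ P := by
        intro ht
        exact hzt ((hnfix t ht).1 hnt).symm
      set n' : V → V := fun v => if v ∈ P then m v else n v with hn'
      have hisn : IsM G s n' := swap_matching hn hm hnP hmP
      have hcard : (suppF n').card = nuv G s := by
        rw [hn', swap_supp_card hPz hPu hnfix hmfix, hnc]
      have hn't : n' t = t := by simp only [hn', if_neg htP]; exact hnt
      have hn'C : n' ∈ C := by
        simp only [hC, Finset.mem_filter, Finset.mem_univ, true_and]
        exact ⟨hisn, hcard, hn't⟩
      -- agreement increases
      have hFn' : univ.filter (fun v => n' v = m v ∧ m v ≠ v) =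
          (univ.filter (fun v => n v = m v ∧ m v ≠ v)) ∪ P.erase u := by
        ext v
        simp only [Finset.mem_filter, Finset.mem_univ, true_and, Finset.mem_union,
          Finset.mem_erase]
        by_cases hv : v ∈ P
        · simp only [hn', if_pos hv]
          constructor
          · rintro ⟨-, hmv⟩
            exact Or.inr ⟨fun h => hmv (by rw [h]; exact hmu), hv⟩
          · rintro (⟨-, h2⟩ | ⟨h1, -⟩)
            · exact ⟨trivial, h2⟩
            · exact ⟨trivial, fun h => h1 ((hmfix v hv).1 h)⟩
        · simp only [hn', if_neg hv]
          constructor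
          · exact fun h => Or.inl h
          · rintro (h | ⟨-, h⟩)
            · exact h
            · exact absurd h hv
      have hdisj : Disjoint (univ.filter (fun v => n v = m v ∧ m v ≠ v)) (P.erase u) := by
        rw [Finset.disjoint_left]
        rintro v hv hv'
        simp only [Finset.mem_filter] at hv
        obtain ⟨-, h1, h2⟩ := hv
        have hvP := Finset.mem_of_mem_erase hv'
        have hvu := (Finset.mem_erase.1 hv').1
        rcases eq_or_ne v z with rfl | hvz
        · exact h2 (by rw [← h1, hnz])
        · exact hdiff v hvP hvu hvz h1.symm
      have hAgrgt : Agr n + 1 ≤ Agr n' := by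
        rw [hAgr]
        simp only
        rw [hFn', Finset.card_union_of_disjoint hdisj]
        have : 1 ≤ (P.erase u).card :=
          Finset.card_pos.2 ⟨z, Finset.mem_erase.2 ⟨hzu, hPz⟩⟩
        omega
      have := hnmax n' hn'C
      omega

end Gallai
section Main

lemma div_add_div_le (a b k : ℕ) : a / k + b / k ≤ (a + b) / k := by
  rcases Nat.eq_zero_or_pos k with rfl | hk
  · simp
  rw [Nat.le_div_iff_mul_le hk, add_mul]
  exact Nat.add_le_add (Nat.div_mul_le_self a k) (Nat.div_mul_le_self b k)

lemma Esize_empty : Esize G (∅ : Finset V) = 0 := by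
  rw [Esize, Finset.card_eq_zero]
  ext e
  induction e with
  | h a b =>
    simp only [SimpleGraph.mem_edgeFinset, SimpleGraph.mem_edgeSet, Finset.notMem_empty,
      iff_false]
    rintro ⟨-, h, -⟩
    exact (Finset.notMem_empty _) h

lemma main_bound {Δ : ℕ} (hΔ : 1 ≤ Δ) (hdeg : ∀ v, G.degree v ≤ Δ) :
    ∀ N (s : Finset V), s.card ≤ N →
      Esize G s ≤ (nuv G s / 2) * Δ + (Δ / 2) * ((nuv G s / 2) / ((Δ + 1) / 2)) := by
  classical
  intro N
  induction N with
  | zero =>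
    intro s hs
    rw [Finset.card_eq_zero.1 (Nat.le_zero.1 hs), Esize_empty]
    exact Nat.zero_le _
  | succ N IH =>
    intro s hcard
    set k := (Δ + 1) / 2 with hk
    have hkpos : 0 < k := by omega
    set q := nuv G s with hq
    set a := q / 2 with ha
    have hqeven : q = 2 * a := by
      obtain ⟨r, hr⟩ := even_nuv (G := G) s
      omega
    by_cases hsplit : ∃ s1 ⊆ s, s1.Nonempty ∧ (s \ s1).Nonempty ∧
        ∀ u ∈ s1, ∀ v ∈ s \ s1, ¬ G.Adj u v
    · -- disconnected: split into two pieces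
      obtain ⟨s1, hsub, hne1, hne2, hcross⟩ := hsplit
      have hs1lt : s1.card < s.card := by
        refine Finset.card_lt_card ?_
        rw [Finset.ssubset_iff_of_subset hsub]
        obtain ⟨v, hv⟩ := hne2
        exact ⟨v, (Finset.mem_sdiff.1 hv).1, (Finset.mem_sdiff.1 hv).2⟩
      have hs2lt : (s \ s1).card < s.card := by
        obtain ⟨v, hv⟩ := hne1
        refine Finset.card_lt_card ?_
        constructor
        · exact Finset.sdiff_subset
        · intro hsub2
          exact (Finset.mem_sdiff.1 (hsub2 (hsub hv))).2 hv
      have h1 := IH s1 (by omega)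
      have h2 := IH (s \ s1) (by omega)
      set q1 := nuv G s1 with hq1
      set q2 := nuv G (s \ s1) with hq2
      have hsum : q1 + q2 ≤ q := by
        have hdis : Disjoint s1 (s \ s1) := Finset.disjoint_sdiff
        have := nuv_superadd (G := G) hdis
        rwa [Finset.union_sdiff_of_subset hsub] at this
      have haa : q1 / 2 + q2 / 2 ≤ a := by
        calc q1 / 2 + q2 / 2 ≤ (q1 + q2) / 2 := div_add_div_le _ _ _
          _ ≤ a := Nat.div_le_div_right hsum
      have hdivs : q1 / 2 / k + q2 / 2 / k ≤ a / k := by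
        calc q1 / 2 / k + q2 / 2 / k ≤ (q1 / 2 + q2 / 2) / k := div_add_div_le _ _ _
          _ ≤ a / k := Nat.div_le_div_right haa
      calc Esize G s = Esize G s1 + Esize G (s \ s1) := Esize_split hsub hcross
        _ ≤ (q1 / 2 * Δ + Δ / 2 * (q1 / 2 / k)) + (q2 / 2 * Δ + Δ / 2 * (q2 / 2 / k)) :=
            Nat.add_le_add h1 h2
        _ = (q1 / 2 + q2 / 2) * Δ + Δ / 2 * (q1 / 2 / k + q2 / 2 / k) := by ring
        _ ≤ a * Δ + Δ / 2 * (a / k) :=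
            Nat.add_le_add (Nat.mul_le_mul_right _ haa) (Nat.mul_le_mul_left _ hdivs)
    · -- connected on s
      have hconn : ∀ u ∈ s, ∀ w ∈ s, (Rg G s).Reachable u w := by
        intro u hu w hw
        by_contra hnr
        set s1 := s.filter (fun v => (Rg G s).Reachable u v) with hs1
        apply hsplit
        refine ⟨s1, Finset.filter_subset _ _, ⟨u, ?_⟩, ⟨w, ?_⟩, ?_⟩
        · exact Finset.mem_filter.2 ⟨hu, SimpleGraph.Reachable.refl u⟩
        · refine Finset.mem_sdiff.2 ⟨hw, ?_⟩
          intro hmem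
          exact hnr (Finset.mem_filter.1 hmem).2
        · intro x hx y hy hadj
          obtain ⟨hxs, hxr⟩ := Finset.mem_filter.1 hx
          obtain ⟨hys, hyn⟩ := Finset.mem_sdiff.1 hy
          have hys' : y ∈ s := hys
          apply hyn
          refine Finset.mem_filter.2 ⟨hys', hxr.trans (SimpleGraph.Adj.reachable ?_)⟩
          exact ⟨hadj, hxs, hys'⟩
      by_cases hper : q = s.card
      · -- perfect matching case
        have h2E := two_Esize_le_deg hdeg s
        have hEA : 2 * Esize G s ≤ 2 * (a * Δ) := by
          calc 2 * Esize G s ≤ s.card * Δ := h2E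
            _ = 2 * (a * Δ) := by rw [← hper, hqeven]; ring
        have : Esize G s ≤ a * Δ := by omega
        exact this.trans (Nat.le_add_right _ _)
      by_cases hdrop : ∃ v ∈ s, nuv G (s.erase v) + 2 ≤ q
      · -- remove an essential vertex
        obtain ⟨v, hvs, hv⟩ := hdrop
        have hlt : (s.erase v).card ≤ N := by
          have := Finset.card_erase_of_mem hvs
          have hpos : 0 < s.card := Finset.card_pos.2 ⟨v, hvs⟩
          omega
        have hrec := IH (s.erase v) hlt
        set q' := nuv G (s.erase v) with hq'
        have hq'even : ∃ r, q' = 2 * r := by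
          obtain ⟨r, hr⟩ := even_nuv (G := G) (s.erase v)
          exact ⟨r, by omega⟩
        obtain ⟨a', ha'⟩ := hq'even
        have ha'a : a' + 1 ≤ a := by omega
        have hE := Esize_erase_le (G := G) (s := s) v hdeg
        calc Esize G s ≤ Esize G (s.erase v) + Δ := hE
          _ ≤ (q' / 2 * Δ + Δ / 2 * (q' / 2 / k)) + Δ := Nat.add_le_add_right hrec _
          _ = (a' + 1) * Δ + Δ / 2 * (a' / k) := by
              rw [ha']; rw [Nat.mul_div_cancel_left _ (by omega : 0 < 2)]; ring
          _ ≤ a * Δ + Δ / 2 * (a / k) := by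
              refine Nat.add_le_add (Nat.mul_le_mul_right _ ha'a) (Nat.mul_le_mul_left _ ?_)
              exact Nat.div_le_div_right (by omega)
      · -- Gallai case: every vertex avoidable
        push_neg at hdrop
        have havoid : ∀ v ∈ s, ∃ nm, IsM G s nm ∧ (suppF nm).card = nuv G s ∧ nm v = v := by
          intro v hv
          have h1 : nuv G (s.erase v) ≤ q := nuv_mono (Finset.erase_subset _ _)
          have h2 : q < nuv G (s.erase v) + 2 := hdrop v hv
          obtain ⟨r, hr⟩ := even_nuv (G := G) (s.erase v)
          have heq : nuv G (s.erase v) = q := by omega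
          obtain ⟨nm, hnm, hnmc⟩ := exists_max_matching (G := G) (s.erase v)
          refine ⟨nm, hnm.mono (Finset.erase_subset _ _), by rw [hnmc, heq], ?_⟩
          by_contra hne
          have := hnm.mem_of_mem_suppF (mem_suppF.2 hne)
          exact (Finset.mem_erase.1 this).1 rfl
        obtain ⟨m, hm, hmc⟩ := exists_max_matching (G := G) s
        have hgal := gallai hconn havoid hm hmc
        -- |s| ≤ q + 1
        have hscard : s.card ≤ q + 1 := by
          have hsplit2 : s.card = (s.filter (fun v => m v = v)).card +
              (s.filter (fun v => ¬ (m v = v))).card := by rw [Finset.card_filter_add_card_filter_not]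
          have hsupp : s.filter (fun v => ¬ (m v = v)) = suppF m := by
            ext v
            simp only [Finset.mem_filter, mem_suppF]
            constructor
            · rintro ⟨-, h⟩; exact h
            · intro h; exact ⟨hm.mem_of_mem_suppF (mem_suppF.2 h), h⟩
          rw [hsupp, hmc] at hsplit2
          omega
        -- two counting bounds
        have hcb1 : 2 * Esize G s ≤ (2 * a + 1) * Δ := by
          calc 2 * Esize G s ≤ s.card * Δ := two_Esize_le_deg hdeg s
            _ ≤ (2 * a + 1) * Δ := Nat.mul_le_mul_right _ (by omega)
        by_cases hka : k ≤ a
        · -- large component: extra ⌊Δ/2⌋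
          have hE : Esize G s ≤ a * Δ + Δ / 2 := by
            have h1 : 2 * (Δ / 2) ≤ Δ := by omega
            have h2 : (2 * a + 1) * Δ = 2 * (a * Δ) + Δ := by ring
            omega
          have hdiv : 1 ≤ a / k := (Nat.one_le_div_iff hkpos).2 hka
          calc Esize G s ≤ a * Δ + Δ / 2 := hE
            _ ≤ a * Δ + Δ / 2 * (a / k) := by
                refine Nat.add_le_add_left ?_ _
                calc Δ / 2 = Δ / 2 * 1 := by ring
                  _ ≤ Δ / 2 * (a / k) := Nat.mul_le_mul_left _ hdiv
        · -- small component: fits under a * Δ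
          push_neg at hka
          have h2a : 2 * a + 1 ≤ Δ := by omega
          have hcb2 : 2 * Esize G s ≤ s.card * (s.card - 1) := two_Esize_le_sq s
          have hsm : s.card * (s.card - 1) ≤ (2 * a + 1) * (2 * a) := by
            refine Nat.mul_le_mul (by omega) (by omega)
          have : 2 * Esize G s ≤ Δ * (2 * a) := by
            calc 2 * Esize G s ≤ (2 * a + 1) * (2 * a) := hcb2.trans hsm
              _ ≤ Δ * (2 * a) := Nat.mul_le_mul_right _ h2a
          have hfin : 2 * Esize G s ≤ 2 * (a * Δ) := by
            calc 2 * Esize G s ≤ Δ * (2 * a) := this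
              _ = 2 * (a * Δ) := by ring
          have : Esize G s ≤ a * Δ := by omega
          exact this.trans (Nat.le_add_right _ _)

end Main

section Bridge

lemma Esize_univ : Esize G (univ : Finset V) = G.edgeFinset.card := by
  have hset : (Rg G univ).edgeSet = G.edgeSet := by
    have : Rg G (univ : Finset V) = G := by
      ext u v
      exact ⟨fun h => h.1, fun h => ⟨h, Finset.mem_univ _, Finset.mem_univ _⟩⟩
    rw [this]
  have : (Rg G univ).edgeFinset = G.edgeFinset := by
    ext e
    rw [SimpleGraph.mem_edgeFinset, SimpleGraph.mem_edgeFinset, hset]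
  rw [Esize, this]

lemma nuv_le_two_nu {ν : ℕ}
    (hmatch : ∀ M : G.Subgraph, M.IsMatching → M.edgeSet.ncard ≤ ν) :
    nuv G (univ : Finset V) ≤ 2 * ν := by
  classical
  obtain ⟨m, hm, hmc⟩ := exists_max_matching (G := G) (univ : Finset V)
  rw [← hmc]
  set M : G.Subgraph :=
    { verts := ↑(suppF m)
      Adj := fun u v => G.Adj u v ∧ m u = v
      adj_sub := fun h => h.1
      edge_vert := by
        rintro u v ⟨hadj, hmu⟩
        rw [Finset.mem_coe, mem_suppF, hmu]
        exact hadj.ne'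
      symm := by
        constructor
        rintro u v ⟨hadj, hmu⟩
        exact ⟨hadj.symm, by rw [← hmu, hm.1 u]⟩ } with hM
  have hmatching : M.IsMatching := by
    intro v hv
    rw [hM] at hv
    simp only [Finset.mem_coe, mem_suppF] at hv
    refine ⟨m v, ⟨(hm.2 v hv).1, rfl⟩, ?_⟩
    rintro y ⟨-, hy⟩
    exact hy.symm
  have hedge : M.edgeSet = ↑((suppF m).image (fun v => s(v, m v))) := by
    ext e
    induction e with
    | h x y =>
      rw [SimpleGraph.Subgraph.mem_edgeSet, Finset.mem_coe, Finset.mem_image]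
      constructor
      · rintro ⟨hadj, hmx⟩
        refine ⟨x, mem_suppF.2 (by rw [hmx]; exact hadj.ne'), ?_⟩
        rw [hmx]
      · rintro ⟨v, hv, hvxy⟩
        rw [Sym2.eq_iff] at hvxy
        rcases hvxy with ⟨hvx, hmy⟩ | ⟨hvy, hmx⟩
        · refine ⟨?_, by rw [← hvx]; exact hmy⟩
          rw [← hvx, ← hmy]
          exact (hm.2 v (mem_suppF.1 hv)).1
        · refine ⟨?_, by rw [← hmx, hm.1 v]; exact hvy⟩
          rw [← hvy, ← hmx]
          exact (hm.2 v (mem_suppF.1 hv)).1.symm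
  have hncard : M.edgeSet.ncard = ((suppF m).image (fun v => s(v, m v))).card := by
    rw [hedge, Set.ncard_coe_finset]
  have hle := hmatch M hmatching
  rw [hncard] at hle
  have hcard2 : (suppF m).card ≤ 2 * ((suppF m).image (fun v => s(v, m v))).card := by
    refine Finset.card_le_mul_card_image _ 2 ?_
    intro e he
    obtain ⟨v, hv, rfl⟩ := Finset.mem_image.1 he
    have hsub : (suppF m).filter (fun x => s(x, m x) = s(v, m v)) ⊆ {v, m v} := by
      intro x hx
      obtain ⟨-, hx2⟩ := Finset.mem_filter.1 hx
      rw [Sym2.eq_iff] at hx2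
      rcases hx2 with ⟨rfl, -⟩ | ⟨h1, -⟩
      · exact Finset.mem_insert_self _ _
      · rw [h1]; exact Finset.mem_insert_of_mem (Finset.mem_singleton_self _)
    calc ((suppF m).filter (fun x => s(x, m x) = s(v, m v))).card ≤ ({v, m v} : Finset V).card :=
          Finset.card_le_card hsub
      _ ≤ 2 := Finset.card_insert_le _ _ |>.trans (by simp)
  omega

end Bridge
end CH

open CH in
/-- Chvátal–Hanson theorem: if every matching of `G` has at most `ν` edges and every
vertex has degree at most `Δ`, then `e(G) ≤ νΔ + ⌊Δ/2⌋⌊ν/⌈Δ/2⌉⌋ ≤ ν(Δ+1)`. -/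
theorem chvatal_hanson {V : Type*} [Fintype V] [DecidableEq V]
    (G : SimpleGraph V) [DecidableRel G.Adj] (ν Δ : ℕ) (hν : 1 ≤ ν) (hΔ : 1 ≤ Δ)
    (hmatch : ∀ M : G.Subgraph, M.IsMatching → M.edgeSet.ncard ≤ ν)
    (hdeg : ∀ v : V, G.degree v ≤ Δ) :
    G.edgeFinset.card ≤ ν * Δ + (Δ / 2) * (ν / ((Δ + 1) / 2)) ∧
      G.edgeFinset.card ≤ ν * (Δ + 1) := by
  have hmain := CH.main_bound hΔ hdeg (Fintype.card V) (univ : Finset V)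
    (le_of_eq (Finset.card_univ))
  rw [Esize_univ] at hmain
  have hnu : nuv G (univ : Finset V) / 2 ≤ ν := by
    have := nuv_le_two_nu hmatch
    omega
  have h1 : G.edgeFinset.card ≤ ν * Δ + (Δ / 2) * (ν / ((Δ + 1) / 2)) := by
    calc G.edgeFinset.card
        ≤ (nuv G univ / 2) * Δ + (Δ / 2) * ((nuv G univ / 2) / ((Δ + 1) / 2)) := hmain
      _ ≤ ν * Δ + (Δ / 2) * (ν / ((Δ + 1) / 2)) := by
          refine Nat.add_le_add (Nat.mul_le_mul_right _ hnu) (Nat.mul_le_mul_left _ ?_)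
          exact Nat.div_le_div_right hnu
  refine ⟨h1, h1.trans ?_⟩
  have h2 : (Δ / 2) * (ν / ((Δ + 1) / 2)) ≤ ν := by
    calc (Δ / 2) * (ν / ((Δ + 1) / 2)) ≤ ((Δ + 1) / 2) * (ν / ((Δ + 1) / 2)) :=
          Nat.mul_le_mul_right _ (Nat.div_le_div_right (by omega))
      _ = (ν / ((Δ + 1) / 2)) * ((Δ + 1) / 2) := Nat.mul_comm _ _
      _ ≤ ν := Nat.div_mul_le_self _ _
  calc ν * Δ + (Δ / 2) * (ν / ((Δ + 1) / 2)) ≤ ν * Δ + ν := Nat.add_le_add_left h2 _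
    _ = ν * (Δ + 1) := by ring
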